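/- The number of rooted forests with vertex set [a] and b components, whose roots are a fixed set of b labels, is b·a^{a-b-1}. -/

import Mathlib

open Function List Finset

namespace CRF

variable {a : ℕ} (R : Finset (Fin a))

/-- extended parent maps fix `R` pointwise -/
def Fix (g : Fin a → Fin a) : Prop := ∀ r ∈ R, g r = r

/-- acyclicity: every vertex eventually reaches `R` -/
def Reaches (g : Fin a → Fin a) : Prop := ∀ v, ∃ K, g^[K] v ∈ R

variable {R}

lemma stay {g : Fin a → Fin a} (hg : Fix R g) {v : Fin a} {k : ℕ}
    (h : g^[k] v ∈ R) : ∀ j, g^[k + j] v = g^[k] v := by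
  intro j
  induction j with
  | zero => rfl
  | succ n ih =>
      rw [← Nat.add_assoc, Function.iterate_succ_apply', ih]
      exact hg _ h

variable (R)

/-- hitting time of `R` -/
noncomputable def hit (g : Fin a → Fin a) (v : Fin a) : ℕ := sInf {K | g^[K] v ∈ R}

variable {R}

lemma hit_mem {g : Fin a → Fin a} {v : Fin a} (h : ∃ K, g^[K] v ∈ R) :
    g^[hit R g v] v ∈ R := Nat.sInf_mem h

lemma hit_min {g : Fin a → Fin a} {v : Fin a} {i : ℕ} (h : i < hit R g v) :
    g^[i] v ∉ R := fun hi => absurd (Nat.sInf_le hi) (not_le.2 h)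

lemma loop_between {g : Fin a → Fin a} {v : Fin a} {i j : ℕ} (hij : i < j)
    (h : g^[i] v = g^[j] v) : ∀ t, ∃ s, i ≤ s ∧ s < j ∧ g^[i + t] v = g^[s] v := by
  intro t
  induction t with
  | zero => exact ⟨i, le_refl i, hij, rfl⟩
  | succ n ih =>
      obtain ⟨s, hs1, hs2, hs3⟩ := ih
      rcases eq_or_lt_of_le (Nat.succ_le_of_lt hs2) with he | hl
      · refine ⟨i, le_refl i, hij, ?_⟩
        rw [← Nat.add_assoc, Function.iterate_succ_apply', hs3,
          ← Function.iterate_succ_apply' g s v, he, ← h]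
      · refine ⟨s + 1, le_trans hs1 (Nat.le_succ s), hl, ?_⟩
        rw [← Nat.add_assoc, Function.iterate_succ_apply', hs3,
          ← Function.iterate_succ_apply' g s v]

/-- iterates before the hitting time are pairwise distinct -/
lemma iter_inj {g : Fin a → Fin a} {v : Fin a} (hv : ∃ K, g^[K] v ∈ R)
    {i j : ℕ} (hi : i < hit R g v) (hj : j < hit R g v) (h : g^[i] v = g^[j] v) :
    i = j := by
  rcases lt_trichotomy i j with hij | hij | hij
  · exfalso
    obtain ⟨s, _, hs2, hs3⟩ := loop_between hij h (hit R g v - i)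
    rw [Nat.add_sub_cancel' (le_of_lt hi)] at hs3
    exact hit_min (lt_trans hs2 hj) (hs3 ▸ hit_mem hv)
  · exact hij
  · exfalso
    obtain ⟨s, _, hs2, hs3⟩ := loop_between hij h.symm (hit R g v - j)
    rw [Nat.add_sub_cancel' (le_of_lt hj)] at hs3
    exact hit_min (lt_trans hs2 hi) (hs3 ▸ hit_mem hv)

variable (R)

/-- the path from `v` to the root, excluding the root -/
noncomputable def pathL (g : Fin a → Fin a) (v : Fin a) : List (Fin a) :=
  (List.range (hit R g v)).map (fun i => g^[i] v)

variable {R}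

lemma pathL_length {g : Fin a → Fin a} {v : Fin a} :
    (pathL R g v).length = hit R g v := by simp [pathL]

lemma pathL_getElem {g : Fin a → Fin a} {v : Fin a} {i : ℕ}
    (h : i < (pathL R g v).length) : (pathL R g v)[i] = g^[i] v := by
  simp [pathL]

lemma pathL_getD {g : Fin a → Fin a} {v : Fin a} {i : ℕ} (d : Fin a)
    (h : i < hit R g v) : (pathL R g v).getD i d = g^[i] v := by
  rw [List.getD_eq_getElem _ _ (by rwa [pathL_length]), pathL_getElem]

lemma pathL_nodup {g : Fin a → Fin a} {v : Fin a} (hv : ∃ K, g^[K] v ∈ R) :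
    (pathL R g v).Nodup := by
  refine List.Nodup.map_on ?_ (List.nodup_range)
  intro i hi j hj hij
  exact iter_inj hv (List.mem_range.1 hi) (List.mem_range.1 hj) hij

lemma pathL_mem {g : Fin a → Fin a} {v : Fin a} {w : Fin a}
    (h : w ∈ pathL R g v) : ∃ i < hit R g v, g^[i] v = w := by
  simp only [pathL, List.mem_map, List.mem_range] at h
  obtain ⟨i, hi, hw⟩ := h
  exact ⟨i, hi, hw⟩

lemma pathL_not_root {g : Fin a → Fin a} {v : Fin a} {w : Fin a}
    (h : w ∈ pathL R g v) : w ∉ R := by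
  obtain ⟨i, hi, hw⟩ := pathL_mem h
  exact hw ▸ hit_min hi

lemma iter_mem_pathL {g : Fin a → Fin a} {v : Fin a} {i : ℕ} (h : i < hit R g v) :
    g^[i] v ∈ pathL R g v := by
  simp only [pathL, List.mem_map, List.mem_range]
  exact ⟨i, h, rfl⟩


/-- Lemma A: if `f = g` off `T` and the `f`-orbit of `w` stays off `T`, the two
orbits agree. -/
lemma follow {f g : Fin a → Fin a} {T : Finset (Fin a)}
    (hfg : ∀ w ∉ T, f w = g w) {k : ℕ} {w : Fin a}
    (h : ∀ j < k, f^[j] w ∉ T) : f^[k] w = g^[k] w := by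
  induction k with
  | zero => rfl
  | succ n ih =>
      rw [Function.iterate_succ_apply', Function.iterate_succ_apply',
        ← ih (fun j hj => h j (Nat.lt_succ_of_lt hj)),
        hfg _ (h n (Nat.lt_succ_self n))]

/-- pigeonhole: a map that is injective on a closed finite set is periodic there -/
lemma perm_periodic {f : Fin a → Fin a} {T : Finset (Fin a)}
    (hcl : ∀ w ∈ T, f w ∈ T)
    (hinj : ∀ w₁ ∈ T, ∀ w₂ ∈ T, f w₁ = f w₂ → w₁ = w₂) :
    ∀ w ∈ T, ∃ k, 1 ≤ k ∧ k ≤ a ∧ f^[k] w = w := by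
  intro w hw
  have hiter : ∀ i, f^[i] w ∈ T := by
    intro i
    induction i with
    | zero => exact hw
    | succ n ih => rw [Function.iterate_succ_apply']; exact hcl _ ih
  have hcard : T.card < (Finset.range (T.card + 1)).card := by
    simp
  obtain ⟨i, hi, j, hj, hne, heq⟩ :=
    Finset.exists_ne_map_eq_of_card_lt_of_maps_to hcard
      (fun i _ => hiter i)
  have cancel : ∀ d i j, i + d = j → f^[i] w = f^[j] w → w = f^[d] w := by
    intro d i
    induction i with
    | zero => intro j hj he; rw [← hj, Nat.zero_add] at he; exact he
    | succ n ih =>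
        intro j hj he
        cases j with
        | zero => omega
        | succ m =>
            refine ih m (by omega) ?_
            rw [Function.iterate_succ_apply', Function.iterate_succ_apply'] at he
            exact hinj _ (hiter n) _ (hiter m) he
  have hcardle : T.card ≤ a := le_trans (Finset.card_le_univ T) (by simp)
  simp only [Finset.mem_range] at hi hj
  rcases lt_or_gt_of_ne hne with hij | hij
  · exact ⟨j - i, by omega, by omega, (cancel (j - i) i j (by omega) heq).symm⟩
  · exact ⟨i - j, by omega, by omega, (cancel (i - j) j i (by omega) heq.symm).symm⟩


variable (R)

/-- the root reached from `v` -/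
noncomputable def phiR (g : Fin a → Fin a) (v : Fin a) : Fin a := g^[hit R g v] v

/-- the Joyal-style modified function -/
noncomputable def phiF (g : Fin a → Fin a) (v : Fin a) : Fin a → Fin a :=
  fun w => if w ∈ (pathL R g v).toFinset
    then (pathL R g v).getD (((pathL R g v).toFinset.sort (·≤·)).idxOf w) v
    else g w

open Classical in
/-- the cyclic vertices of `h` outside `R` -/
noncomputable def psiC (h : Fin a → Fin a) : Finset (Fin a) :=
  Finset.univ.filter (fun w => w ∉ R ∧ ∃ k ∈ Finset.Icc 1 a, h^[k] w = w)

/-- the list of cyclic vertices, ordered as images of the sorted list -/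
noncomputable def psiX (h : Fin a → Fin a) : List (Fin a) := ((psiC R h).sort (·≤·)).map h

/-- recovered marked vertex -/
noncomputable def psiV (ρ : Fin a) (h : Fin a → Fin a) : Fin a := (psiX R h).getD 0 ρ

/-- recovered parent function -/
noncomputable def psiF (ρ : Fin a) (h : Fin a → Fin a) : Fin a → Fin a :=
  fun w => if w ∈ psiC R h
    then (psiX R h ++ [ρ]).getD ((psiX R h).idxOf w + 1) ρ
    else h w

variable {R}

lemma mem_psiC {h : Fin a → Fin a} {w : Fin a} :
    w ∈ psiC R h ↔ (w ∉ R ∧ ∃ k, 1 ≤ k ∧ k ≤ a ∧ h^[k] w = w) := by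
  classical
  simp [psiC, Finset.mem_filter, Finset.mem_Icc, and_assoc]

lemma psiC_not_root {h : Fin a → Fin a} {w : Fin a} (hw : w ∈ psiC R h) : w ∉ R :=
  (mem_psiC.1 hw).1

/-- every iterate of a cyclic vertex avoids `R` -/
lemma psiC_iter_not_root {h : Fin a → Fin a} (hfix : Fix R h) {w : Fin a}
    (hw : w ∈ psiC R h) : ∀ i, h^[i] w ∉ R := by
  obtain ⟨hwR, k, hk1, hka, hk⟩ := mem_psiC.1 hw
  have hper : ∀ t, h^[k * t] w = w := by
    intro t
    induction t with
    | zero => rfl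
    | succ n ih => rw [Nat.mul_succ, Function.iterate_add_apply, hk, ih]
  intro i hi
  have h1 : h^[i + (k * i - i)] w = h^[i] w := stay hfix hi _
  have h2 : i + (k * i - i) = k * i := by
    have : i ≤ k * i := Nat.le_mul_of_pos_left i (by omega)
    omega
  rw [h2, hper i] at h1
  exact hwR (h1 ▸ hi)

/-- `psiC` is closed under `h` -/
lemma psiC_closed {h : Fin a → Fin a} (hfix : Fix R h) {w : Fin a}
    (hw : w ∈ psiC R h) : h w ∈ psiC R h := by
  obtain ⟨hwR, k, hk1, hka, hk⟩ := mem_psiC.1 hw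
  refine mem_psiC.2 ⟨?_, k, hk1, hka, ?_⟩
  · have := psiC_iter_not_root hfix hw 1
    simpa using this
  · rw [← Function.iterate_succ_apply, Function.iterate_succ_apply', hk]

/-- `h` is injective on `psiC` -/
lemma psiC_inj {h : Fin a → Fin a} :
    ∀ w₁ ∈ psiC R h, ∀ w₂ ∈ psiC R h, h w₁ = h w₂ → w₁ = w₂ := by
  intro w₁ h₁ w₂ h₂ he
  obtain ⟨_, k₁, hk₁, _, hp₁⟩ := mem_psiC.1 h₁
  obtain ⟨_, k₂, hk₂, _, hp₂⟩ := mem_psiC.1 h₂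
  have hper : ∀ (k : ℕ) (w : Fin a), h^[k] w = w → ∀ t, h^[k * t] w = w := by
    intro k w hk t
    induction t with
    | zero => rfl
    | succ n ih => rw [Nat.mul_succ, Function.iterate_add_apply, hk, ih]
  have e₁ : h^[k₁ * k₂] w₁ = w₁ := hper k₁ w₁ hp₁ k₂
  have e₂ : h^[k₁ * k₂] w₂ = w₂ := by rw [Nat.mul_comm]; exact hper k₂ w₂ hp₂ k₁
  have hpos : 1 ≤ k₁ * k₂ := Nat.one_le_iff_ne_zero.2 (by positivity)
  calc w₁ = h^[k₁ * k₂] w₁ := e₁.symm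
    _ = h^[k₁ * k₂ - 1] (h w₁) := by
        rw [← Function.iterate_succ_apply, Nat.succ_eq_add_one, Nat.sub_add_cancel hpos]
    _ = h^[k₁ * k₂ - 1] (h w₂) := by rw [he]
    _ = h^[k₁ * k₂] w₂ := by
        rw [← Function.iterate_succ_apply, Nat.succ_eq_add_one, Nat.sub_add_cancel hpos]
    _ = w₂ := e₂


lemma psiX_length {h : Fin a → Fin a} : (psiX R h).length = (psiC R h).card := by
  simp [psiX]

lemma psiX_getElem {h : Fin a → Fin a} {i : ℕ} (hi : i < (psiX R h).length) :
    (psiX R h)[i] = h (((psiC R h).sort (·≤·))[i]'(by simpa [psiX] using hi)) := by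
  simp [psiX]

lemma psiX_nodup {h : Fin a → Fin a} : (psiX R h).Nodup := by
  refine List.Nodup.map_on ?_ (Finset.sort_nodup _ _)
  intro w₁ h₁ w₂ h₂ he
  exact psiC_inj _ ((Finset.mem_sort _).1 h₁) _ ((Finset.mem_sort _).1 h₂) he

lemma psiC_image {h : Fin a → Fin a} (hfix : Fix R h) :
    (psiC R h).image h = psiC R h := by
  refine Finset.eq_of_subset_of_card_le ?_ ?_
  · intro w hw
    obtain ⟨y, hy, hyw⟩ := Finset.mem_image.1 hw
    exact hyw ▸ psiC_closed hfix hy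
  · rw [Finset.card_image_of_injOn (fun w₁ h₁ w₂ h₂ => psiC_inj _ h₁ _ h₂)]

lemma psiX_mem {h : Fin a → Fin a} (hfix : Fix R h) {w : Fin a} :
    w ∈ psiX R h ↔ w ∈ psiC R h := by
  constructor
  · intro hw
    obtain ⟨y, hy, hyw⟩ := List.mem_map.1 hw
    exact hyw ▸ psiC_closed hfix ((Finset.mem_sort _).1 hy)
  · intro hw
    rw [← psiC_image hfix] at hw
    obtain ⟨y, hy, hyw⟩ := Finset.mem_image.1 hw
    exact List.mem_map.2 ⟨y, (Finset.mem_sort _).2 hy, hyw⟩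

lemma psiX_toFinset {h : Fin a → Fin a} (hfix : Fix R h) :
    (psiX R h).toFinset = psiC R h := by
  ext w
  rw [List.mem_toFinset, psiX_mem hfix]

section PhiF

variable {g : Fin a → Fin a} {v : Fin a}

lemma phiF_off {w : Fin a} (hw : w ∉ (pathL R g v).toFinset) :
    phiF R g v w = g w := by
  rw [phiF, if_neg hw]

lemma phiF_fix (hv : ∃ K, g^[K] v ∈ R) (hfix : Fix R g) : Fix R (phiF R g v) := by
  intro r hr
  rw [phiF_off (fun hc => pathL_not_root (List.mem_toFinset.1 hc) hr), hfix r hr]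

/-- the key property: `phiF` maps the sorted path onto the path, in order -/
lemma phiF_map_sort (hv : ∃ K, g^[K] v ∈ R) :
    (((pathL R g v).toFinset.sort (·≤·)).map (phiF R g v)) = pathL R g v := by
  have hnd := pathL_nodup (R := R) hv
  have hlen : ((pathL R g v).toFinset.sort (·≤·)).length = (pathL R g v).length := by
    rw [Finset.length_sort, List.toFinset_card_of_nodup hnd]
  refine List.ext_getElem (by simpa using hlen) ?_
  intro i hi hi'
  rw [List.getElem_map]
  have hmem : ((pathL R g v).toFinset.sort (·≤·))[i]'(by simpa using hi)
      ∈ (pathL R g v).toFinset := by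
    rw [← Finset.mem_sort (α := Fin a) (·≤·)]
    exact List.getElem_mem _
  rw [phiF, if_pos hmem, List.Nodup.idxOf_getElem (Finset.sort_nodup _ _),
    List.getD_eq_getElem _ _ hi']

lemma phiF_on_path (hv : ∃ K, g^[K] v ∈ R) {w : Fin a}
    (hw : w ∈ (pathL R g v).toFinset) : phiF R g v w ∈ (pathL R g v).toFinset := by
  have hwY : w ∈ (pathL R g v).toFinset.sort (·≤·) := (Finset.mem_sort _).2 hw
  obtain ⟨i, hi, hiw⟩ := List.getElem_of_mem hwY
  have : phiF R g v w ∈ ((pathL R g v).toFinset.sort (·≤·)).map (phiF R g v) := by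
    rw [← hiw]
    exact List.mem_map_of_mem (List.getElem_mem _)
  rw [phiF_map_sort hv] at this
  exact List.mem_toFinset.2 this

lemma phiF_inj_on_path (hv : ∃ K, g^[K] v ∈ R) :
    ∀ w₁ ∈ (pathL R g v).toFinset, ∀ w₂ ∈ (pathL R g v).toFinset,
      phiF R g v w₁ = phiF R g v w₂ → w₁ = w₂ := by
  have hnd : (((pathL R g v).toFinset.sort (·≤·)).map (phiF R g v)).Nodup := by
    rw [phiF_map_sort hv]; exact pathL_nodup hv
  intro w₁ h₁ w₂ h₂ he
  have h₁' : w₁ ∈ (pathL R g v).toFinset.sort (·≤·) := (Finset.mem_sort _).2 h₁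
  have h₂' : w₂ ∈ (pathL R g v).toFinset.sort (·≤·) := (Finset.mem_sort _).2 h₂
  exact List.inj_on_of_nodup_map hnd h₁' h₂' he

/-- multiples of a period are periods -/
lemma iterate_mul_fixed {h : Fin a → Fin a} {w : Fin a} {k : ℕ}
    (hk : h^[k] w = w) : ∀ t, h^[k * t] w = w := by
  intro t
  induction t with
  | zero => rfl
  | succ n ih => rw [Nat.mul_succ, Function.iterate_add_apply, hk, ih]

/-- the cycle set of `phiF` is exactly the path -/
lemma psiC_phiF (hfix : Fix R g) (hre : Reaches R g) :
    psiC R (phiF R g v) = (pathL R g v).toFinset := by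
  have hv := hre v
  ext w
  constructor
  · intro hw
    obtain ⟨hwR, k, hk1, _, hk⟩ := mem_psiC.1 hw
    by_contra hwP
    by_cases hP : ∃ i, (phiF R g v)^[i] w ∈ (pathL R g v).toFinset
    · -- the orbit enters the closed set P, hence w itself is in P
      obtain ⟨i, hi⟩ := hP
      have hclosed : ∀ t, (phiF R g v)^[i + t] w ∈ (pathL R g v).toFinset := by
        intro t
        induction t with
        | zero => exact hi
        | succ n ih =>
            rw [← Nat.add_assoc, Function.iterate_succ_apply']
            exact phiF_on_path hv ih
      have hki : i + (k * i - i) = k * i :=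
        Nat.add_sub_cancel' (Nat.le_mul_of_pos_left i hk1)
      have := hclosed (k * i - i)
      rw [hki, iterate_mul_fixed hk i] at this
      exact hwP this
    · push_neg at hP
      have heq : ∀ j, (phiF R g v)^[j] w = g^[j] w := by
        intro j
        exact follow (fun x hx => phiF_off hx) (fun i _ => hP i)
      obtain ⟨K, hK⟩ := hre w
      have h1 : g^[k * K] w = w := by
        rw [← heq, iterate_mul_fixed (heq k ▸ hk)]
      have h2 : g^[K + (k * K - K)] w = g^[K] w := stay hfix hK _
      rw [Nat.add_sub_cancel' (Nat.le_mul_of_pos_left K hk1), h1] at h2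
      exact hwR (h2 ▸ hK)
  · intro hw
    refine mem_psiC.2 ⟨pathL_not_root (List.mem_toFinset.1 hw), ?_⟩
    exact perm_periodic (fun x hx => phiF_on_path hv hx) (phiF_inj_on_path hv) w hw

/-- recovering the list -/
lemma psiX_phiF (hfix : Fix R g) (hre : Reaches R g) :
    psiX R (phiF R g v) = pathL R g v := by
  rw [psiX, psiC_phiF hfix hre, phiF_map_sort (hre v)]

/-- recovering the marked vertex -/
lemma psiV_phiF (hfix : Fix R g) (hre : Reaches R g) :
    psiV R (phiR R g v) (phiF R g v) = v := by
  rw [psiV, psiX_phiF hfix hre]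
  rcases Nat.eq_zero_or_pos (hit R g v) with h0 | h0
  · have : (pathL R g v).length = 0 := by rw [pathL_length, h0]
    rw [List.length_eq_zero_iff] at this
    rw [this]
    simp only [List.getD]
    rw [phiR, h0]
    rfl
  · rw [pathL_getD _ h0]
    rfl

/-- recovering the parent function -/
lemma psiF_phiF (hfix : Fix R g) (hre : Reaches R g) :
    psiF R (phiR R g v) (phiF R g v) = g := by
  have hv := hre v
  funext w
  rw [psiF, psiC_phiF hfix hre, psiX_phiF hfix hre]
  by_cases hw : w ∈ (pathL R g v).toFinset
  · rw [if_pos hw]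
    have hwl : w ∈ pathL R g v := List.mem_toFinset.1 hw
    set i := (pathL R g v).idxOf w with hidef
    have hi : i < (pathL R g v).length := List.idxOf_lt_length_iff.2 hwl
    have hiw : (pathL R g v)[i] = w := List.getElem_idxOf hi
    have hihit : i < hit R g v := by rwa [pathL_length] at hi
    have hgw : g w = g^[i + 1] v := by
      rw [← hiw, pathL_getElem, ← Function.iterate_succ_apply' g i v]
    rcases lt_or_eq_of_le (Nat.succ_le_of_lt hihit) with hlt | heq
    · rw [List.getD_append _ _ _ _ (by rwa [pathL_length]),
        pathL_getD _ hlt, hgw]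
    · have hlen : i + 1 = (pathL R g v).length := by rw [pathL_length]; exact heq
      rw [hlen, List.getD_append_right _ _ _ _ (le_refl _), Nat.sub_self, phiR, ← heq, hgw]
      rfl
  · rw [if_neg hw, phiF_off hw]

end PhiF

section Psi

variable {h : Fin a → Fin a} {ρ : Fin a}

lemma psiF_off {w : Fin a} (hw : w ∉ psiC R h) : psiF R ρ h w = h w := by
  rw [psiF, if_neg hw]

lemma psiF_fix (hfix : Fix R h) : Fix R (psiF R ρ h) := by
  intro r hr
  rw [psiF_off (fun hc => psiC_not_root hc hr), hfix r hr]

lemma psiF_on {w : Fin a} (hw : w ∈ psiC R h) :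
    psiF R ρ h w = (psiX R h ++ [ρ]).getD ((psiX R h).idxOf w + 1) ρ := by
  rw [psiF, if_pos hw]

lemma psiX_append_getD_last :
    (psiX R h ++ [ρ]).getD (psiX R h).length ρ = ρ := by
  rw [List.getD_append_right _ _ _ _ (le_refl _), Nat.sub_self]
  rfl

lemma psiF_orbit (hfix : Fix R h) (i : ℕ) :
    ∀ t, i + t ≤ (psiX R h).length →
      (psiF R ρ h)^[t] ((psiX R h ++ [ρ]).getD i ρ) =
        (psiX R h ++ [ρ]).getD (i + t) ρ := by
  intro t
  induction t with
  | zero => intro _; rfl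
  | succ n ih =>
      intro hn
      have hin : i + n < (psiX R h).length := by omega
      rw [Function.iterate_succ_apply', ih (by omega),
        List.getD_append _ _ _ _ hin, List.getD_eq_getElem _ _ hin]
      have hmem : (psiX R h)[i + n] ∈ psiC R h :=
        (psiX_mem hfix).1 (List.getElem_mem _)
      rw [psiF_on hmem, List.Nodup.idxOf_getElem psiX_nodup _ hin, ← Nat.add_assoc]

lemma psiF_reach_of_cyc (hfix : Fix R h) (hρ : ρ ∈ R) {c : Fin a}
    (hc : c ∈ psiC R h) : ∃ K, (psiF R ρ h)^[K] c ∈ R := by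
  have hcX : c ∈ psiX R h := (psiX_mem hfix).2 hc
  set i := (psiX R h).idxOf c with hidef
  have hi : i < (psiX R h).length := List.idxOf_lt_length_iff.2 hcX
  have hic : (psiX R h ++ [ρ]).getD i ρ = c := by
    rw [List.getD_append _ _ _ _ hi, List.getD_eq_getElem _ _ hi,
      List.getElem_idxOf hi]
  refine ⟨(psiX R h).length - i, ?_⟩
  rw [← hic, psiF_orbit hfix i _ (by omega), Nat.add_sub_cancel' (le_of_lt hi),
    psiX_append_getD_last]
  exact hρ

lemma psiF_reaches (hfix : Fix R h) (hρ : ρ ∈ R) : Reaches R (psiF R ρ h) := by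
  intro w
  -- first: the h-orbit of any vertex eventually enters `psiC ∪ R`
  have hhit : ∃ i, h^[i] w ∈ psiC R h ∨ h^[i] w ∈ R := by
    have hcard : (Finset.univ : Finset (Fin a)).card < (Finset.range (a + 1)).card := by
      simp
    obtain ⟨i, hi, j, hj, hne, heq⟩ :=
      Finset.exists_ne_map_eq_of_card_lt_of_maps_to hcard
        (fun i _ => Finset.mem_univ (h^[i] w))
    simp only [Finset.mem_range] at hi hj
    have key : ∀ p q : ℕ, p < q → q ≤ a → h^[p] w = h^[q] w →
        h^[p] w ∈ psiC R h ∨ h^[p] w ∈ R := by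
      intro p q hpq hqa he
      by_cases hpR : h^[p] w ∈ R
      · exact Or.inr hpR
      · refine Or.inl (mem_psiC.2 ⟨hpR, q - p, by omega, by omega, ?_⟩)
        rw [← Function.iterate_add_apply, Nat.sub_add_cancel (le_of_lt hpq), ← he]
    rcases lt_or_gt_of_ne hne with hij | hij
    · exact ⟨i, key i j hij (by omega) heq⟩
    · exact ⟨j, key j i hij (by omega) heq.symm⟩
  set i₀ := sInf {i | h^[i] w ∈ psiC R h ∨ h^[i] w ∈ R} with hi₀
  have hmem : h^[i₀] w ∈ psiC R h ∨ h^[i₀] w ∈ R := Nat.sInf_mem hhit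
  have hbefore : ∀ j < i₀, h^[j] w ∉ psiC R h := by
    intro j hj hc
    exact absurd (Nat.sInf_le (Or.inl hc)) (not_le.2 hj)
  have hfollow : h^[i₀] w = (psiF R ρ h)^[i₀] w :=
    follow (fun x hx => (psiF_off hx).symm) hbefore
  rcases hmem with hc | hr
  · obtain ⟨K, hK⟩ := psiF_reach_of_cyc hfix hρ (hfollow ▸ hc)
    refine ⟨K + i₀, ?_⟩
    rwa [Function.iterate_add_apply]
  · exact ⟨i₀, by rwa [hfollow] at hr⟩

lemma psiV_orbit (hfix : Fix R h) :
    ∀ i ≤ (psiX R h).length,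
      (psiF R ρ h)^[i] (psiV R ρ h) = (psiX R h ++ [ρ]).getD i ρ := by
  intro i hi
  have h0 : (psiX R h ++ [ρ]).getD 0 ρ = psiV R ρ h := by
    rcases Nat.eq_zero_or_pos (psiX R h).length with hm | hm
    · rw [List.length_eq_zero_iff] at hm
      rw [psiV, hm]
      rfl
    · rw [psiV, List.getD_append _ _ _ _ hm]
  have := psiF_orbit (ρ := ρ) hfix 0 i (by omega)
  rwa [Nat.zero_add, h0] at this

lemma hit_psiF (hfix : Fix R h) (hρ : ρ ∈ R) :
    hit R (psiF R ρ h) (psiV R ρ h) = (psiX R h).length := by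
  have hmem : (psiF R ρ h)^[(psiX R h).length] (psiV R ρ h) ∈ R := by
    rw [psiV_orbit hfix _ (le_refl _), psiX_append_getD_last]
    exact hρ
  have hlt : ∀ i < (psiX R h).length, (psiF R ρ h)^[i] (psiV R ρ h) ∉ R := by
    intro i hi
    rw [psiV_orbit hfix _ (le_of_lt hi), List.getD_append _ _ _ _ hi,
      List.getD_eq_getElem _ _ hi]
    exact psiC_not_root ((psiX_mem hfix).1 (List.getElem_mem _))
  have h1 : hit R (psiF R ρ h) (psiV R ρ h) ≤ (psiX R h).length := Nat.sInf_le hmem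
  rcases lt_or_eq_of_le h1 with h2 | h2
  · exact absurd (hit_mem ⟨_, hmem⟩) (hlt _ h2)
  · exact h2

lemma pathL_psiF (hfix : Fix R h) (hρ : ρ ∈ R) :
    pathL R (psiF R ρ h) (psiV R ρ h) = psiX R h := by
  refine List.ext_getElem ?_ ?_
  · rw [pathL_length, hit_psiF hfix hρ]
  · intro i hi hi'
    rw [pathL_getElem, psiV_orbit hfix _ (le_of_lt hi'),
      List.getD_append _ _ _ _ hi', List.getD_eq_getElem _ _ hi']

lemma phiR_psiF (hfix : Fix R h) (hρ : ρ ∈ R) :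
    phiR R (psiF R ρ h) (psiV R ρ h) = ρ := by
  rw [phiR, hit_psiF hfix hρ, psiV_orbit hfix _ (le_refl _), psiX_append_getD_last]

lemma phiF_psiF (hfix : Fix R h) (hρ : ρ ∈ R) :
    phiF R (psiF R ρ h) (psiV R ρ h) = h := by
  funext w
  have hPC : (pathL R (psiF R ρ h) (psiV R ρ h)).toFinset = psiC R h := by
    rw [pathL_psiF hfix hρ, psiX_toFinset hfix]
  by_cases hw : w ∈ psiC R h
  · rw [phiF, if_pos (hPC ▸ hw : _), hPC, pathL_psiF hfix hρ]
    have hwY : w ∈ (psiC R h).sort (·≤·) := (Finset.mem_sort _).2 hw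
    set i := ((psiC R h).sort (·≤·)).idxOf w with hidef
    have hi : i < ((psiC R h).sort (·≤·)).length := List.idxOf_lt_length_iff.2 hwY
    have hiX : i < (psiX R h).length := by rwa [psiX_length, ← Finset.length_sort (·≤·)]
    rw [List.getD_eq_getElem _ _ hiX, psiX_getElem hiX, List.getElem_idxOf hi]
  · rw [phiF, if_neg (fun hc => hw (hPC ▸ hc)), psiF_off hw]

end Psi

variable (R)

/-- the Joyal-style bijection -/
noncomputable def mainEquiv :
    (Fin a) × {g : Fin a → Fin a // Fix R g ∧ Reaches R g} ≃
      (↥R) × {h : Fin a → Fin a // Fix R h} where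
  toFun p := (⟨phiR R p.2.1 p.1, hit_mem (p.2.2.2 p.1)⟩,
    ⟨phiF R p.2.1 p.1, phiF_fix (p.2.2.2 p.1) p.2.2.1⟩)
  invFun q := (psiV R q.1.1 q.2.1,
    ⟨psiF R q.1.1 q.2.1, psiF_fix q.2.2, psiF_reaches q.2.2 q.1.2⟩)
  left_inv p := by
    obtain ⟨v, g, hfix, hre⟩ := p
    refine Prod.ext (psiV_phiF hfix hre) (Subtype.ext (psiF_phiF hfix hre))
  right_inv q := by
    obtain ⟨⟨ρ, hρ⟩, h, hfix⟩ := q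
    refine Prod.ext (Subtype.ext (phiR_psiF hfix hρ)) (Subtype.ext (phiF_psiF hfix hρ))

/-- arbitrary extended functions correspond to parent maps on non-roots -/
def fixEquiv : {h : Fin a → Fin a // Fix R h} ≃ ({v : Fin a // v ∉ R} → Fin a) where
  toFun g w := g.1 w.1
  invFun f := ⟨fun w => if hw : w ∈ R then w else f ⟨w, hw⟩, fun r hr => dif_pos hr⟩
  left_inv g := by
    refine Subtype.ext (funext fun w => ?_)
    dsimp only
    by_cases hw : w ∈ R
    · rw [dif_pos hw, g.2 w hw]
    · rw [dif_neg hw]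
  right_inv f := funext fun w => dif_neg w.2

/-- good extended functions correspond to acyclic parent maps -/
def goodEquiv : {g : Fin a → Fin a // Fix R g ∧ Reaches R g} ≃
    {f : {v : Fin a // v ∉ R} → Fin a //
      ∀ v : Fin a, ∃ K : ℕ,
        (fun w => if h : w ∈ R then w else f ⟨w, h⟩)^[K] v ∈ R} where
  toFun g := ⟨fun w => g.1 w.1, by
    have he : (fun w : Fin a => if h : w ∈ R then w else g.1 w) = g.1 := by
      funext w
      by_cases hw : w ∈ R
      · rw [dif_pos hw, g.2.1 w hw]
      · rw [dif_neg hw]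
    intro v
    obtain ⟨K, hK⟩ := g.2.2 v
    exact ⟨K, by rw [he]; exact hK⟩⟩
  invFun f := ⟨fun w => if hw : w ∈ R then w else f.1 ⟨w, hw⟩,
    ⟨fun r hr => dif_pos hr, f.2⟩⟩
  left_inv g := by
    refine Subtype.ext (funext fun w => ?_)
    dsimp only
    by_cases hw : w ∈ R
    · rw [dif_pos hw, g.2.1 w hw]
    · rw [dif_neg hw]
  right_inv f := Subtype.ext (funext fun w => dif_neg w.2)

lemma pow_split {a b : ℕ} (hba : b < a) : a ^ (a - b) = a ^ (a - b - 1) * a := by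
  obtain ⟨c, hc⟩ : ∃ c, a - b = c + 1 := ⟨a - b - 1, by omega⟩
  have hc' : a - b - 1 = c := by omega
  rw [hc', hc, pow_succ]

end CRF

theorem card_rooted_forests (a b : ℕ) (hb : 1 ≤ b) (hba : b < a)
    (R : Finset (Fin a)) (hR : R.card = b) :
    {f : {v : Fin a // v ∉ R} → Fin a |
        ∀ v : Fin a, ∃ K : ℕ,
          (fun w => if h : w ∈ R then w else f ⟨w, h⟩)^[K] v ∈ R}.ncard =
      b * a ^ (a - b - 1) := by
  classical
  have hcardFix : Nat.card {h : Fin a → Fin a // CRF.Fix R h} = a ^ (a - b) := by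
    rw [Nat.card_congr (CRF.fixEquiv R), Nat.card_eq_fintype_card, Fintype.card_fun,
      Fintype.card_fin]
    congr 1
    rw [Fintype.card_subtype_compl]
    simp [hR]
  have hmain := Nat.card_congr (CRF.mainEquiv R)
  rw [Nat.card_prod, Nat.card_prod, Nat.card_eq_fintype_card (α := Fin a),
    Fintype.card_fin, hcardFix, Nat.card_eq_fintype_card (α := ↥R),
    Fintype.card_coe, hR] at hmain
  have hset : {f : {v : Fin a // v ∉ R} → Fin a |
      ∀ v : Fin a, ∃ K : ℕ,
        (fun w => if h : w ∈ R then w else f ⟨w, h⟩)^[K] v ∈ R}.ncard =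
      Nat.card {g : Fin a → Fin a // CRF.Fix R g ∧ CRF.Reaches R g} := by
    rw [← Nat.card_coe_set_eq]
    exact (Nat.card_congr (CRF.goodEquiv R)).symm
  rw [hset]
  rw [CRF.pow_split hba] at hmain
  have ha : 0 < a := Nat.lt_of_le_of_lt (Nat.zero_le b) hba
  refine Nat.eq_of_mul_eq_mul_left ha ?_
  rw [hmain]
  ring
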